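/- arXiv:1504.04422 — 2 statements merged into one kernel-verified Lean document; each statement's English description precedes it below -/
import Mathlib

section
/- Let Γ be a finite connected non-complete graph of prime valency p that is 2-geodesic transitive but not 2-arc transitive. Then for every pair of adjacent vertices v,u, the number of common neighbours of v and u equals (p-1)/2. -/
open SimpleGraph

/-- `Γ` is arc transitive: its automorphism group is transitive on ordered pairs
of adjacent vertices. -/
def ArcTransitive {V : Type*} (Γ : SimpleGraph V) : Prop :=
  ∀ ⦃v u v' u' : V⦄, Γ.Adj v u → Γ.Adj v' u' →
    ∃ φ : Γ ≃g Γ, φ v = v' ∧ φ u = u'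

/-- `(v,u,w)` is a 2-arc of `Γ`. -/
def Is2Arc {V : Type*} (Γ : SimpleGraph V) (v u w : V) : Prop :=
  Γ.Adj v u ∧ Γ.Adj u w ∧ v ≠ w

/-- `(v,u,w)` is a 2-geodesic of `Γ`: a 2-arc with `v`, `w` non-adjacent. -/
def Is2Geodesic {V : Type*} (Γ : SimpleGraph V) (v u w : V) : Prop :=
  Γ.Adj v u ∧ Γ.Adj u w ∧ v ≠ w ∧ ¬ Γ.Adj v w

/-- `Γ` is 2-arc transitive: arc transitive and transitive on 2-arcs. -/
def TwoArcTransitive {V : Type*} (Γ : SimpleGraph V) : Prop :=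
  ArcTransitive Γ ∧
  ∀ ⦃v u w v' u' w' : V⦄, Is2Arc Γ v u w → Is2Arc Γ v' u' w' →
    ∃ φ : Γ ≃g Γ, φ v = v' ∧ φ u = u' ∧ φ w = w'

/-- `Γ` is 2-geodesic transitive: arc transitive and transitive on 2-geodesics. -/
def TwoGeodesicTransitive {V : Type*} (Γ : SimpleGraph V) : Prop :=
  ArcTransitive Γ ∧
  ∀ ⦃v u w v' u' w' : V⦄, Is2Geodesic Γ v u w → Is2Geodesic Γ v' u' w' →
    ∃ φ : Γ ≃g Γ, φ v = v' ∧ φ u = u' ∧ φ w = w'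

set_option linter.unusedSectionVars false
set_option linter.unusedVariables false
set_option maxHeartbeats 1000000
section StmtAuxSection
open Equiv
open scoped Classical

namespace StmtAux

variable {p : ℕ}

/-- The orbit relation of the stabiliser of `0` in `G`. -/
def Req (G : Subgroup (Equiv.Perm (ZMod p))) (x y : ZMod p) : Prop :=
  ∃ g ∈ G, g 0 = 0 ∧ g x = y

lemma req_refl (G : Subgroup (Equiv.Perm (ZMod p))) (x : ZMod p) : Req G x x :=
  ⟨1, G.one_mem, rfl, rfl⟩

lemma req_symm {G : Subgroup (Equiv.Perm (ZMod p))} {x y : ZMod p}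
    (h : Req G x y) : Req G y x := by
  obtain ⟨g, hg, h0, hxy⟩ := h
  refine ⟨g⁻¹, G.inv_mem hg, ?_, ?_⟩
  · have h := Equiv.symm_apply_apply g 0; rw [h0] at h; exact h
  · have h := Equiv.symm_apply_apply g x; rw [hxy] at h; exact h

lemma req_trans {G : Subgroup (Equiv.Perm (ZMod p))} {x y z : ZMod p}
    (h : Req G x y) (h' : Req G y z) : Req G x z := by
  obtain ⟨g, hg, h0, hxy⟩ := h
  obtain ⟨g', hg', h0', hyz⟩ := h'
  refine ⟨g' * g, G.mul_mem hg' hg, ?_, ?_⟩ <;>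
    simp [Equiv.Perm.mul_apply, h0, hxy, h0', hyz]

lemma addLeft_one_pow (n : ℕ) :
    (Equiv.addLeft (1 : ZMod p)) ^ n = Equiv.addLeft (n : ZMod p) := by
  induction n with
  | zero => ext x; simp
  | succ n ih =>
    ext x
    simp [pow_succ, Equiv.Perm.mul_apply, ih]
    try push_cast
    try ring

variable {G : Subgroup (Equiv.Perm (ZMod p))}

lemma transl_mem [NeZero p] (hT : Equiv.addLeft (1 : ZMod p) ∈ G) (s : ZMod p) :
    Equiv.addLeft s ∈ G := by
  have h := G.pow_mem hT s.val
  rw [addLeft_one_pow] at h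
  simpa [ZMod.natCast_val, ZMod.cast_id] using h

/-- key sublemma : differences stay in the same class. -/
lemma req_diff [NeZero p] (hT : Equiv.addLeft (1 : ZMod p) ∈ G)
    {g : Equiv.Perm (ZMod p)} (hg : g ∈ G) (s t : ZMod p) :
    Req G (t - s) (g t - g s) := by
  refine ⟨Equiv.addLeft (-(g s)) * g * Equiv.addLeft s,
    G.mul_mem (G.mul_mem (transl_mem hT _) hg) (transl_mem hT _), ?_, ?_⟩ <;>
    simp [Equiv.Perm.mul_apply, sub_eq_neg_add]

/-- a function constant on the classes of `Req`. -/
def ClassConst (G : Subgroup (Equiv.Perm (ZMod p))) {R : Type*} (f : ZMod p → R) : Prop :=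
  ∀ x y, Req G x y → f x = f y

lemma classConst_mul [NeZero p] {q : ℕ} (hT : Equiv.addLeft (1 : ZMod p) ∈ G)
    {f g : AddMonoidAlgebra (ZMod q) (ZMod p)}
    (hf : ClassConst G ⇑f.coeff) (hg : ClassConst G ⇑g.coeff) : ClassConst G ⇑(f * g).coeff := by
  intro x y hxy
  obtain ⟨σ, hσ, hσ0, hσx⟩ := hxy
  have conv : ∀ u v : AddMonoidAlgebra (ZMod q) (ZMod p), ∀ z : ZMod p,
      (u * v).coeff z = ∑ w : ZMod p, u.coeff w * v.coeff (z - w) := by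
    intro u v z
    classical
    rw [AddMonoidAlgebra.mul_apply]
    rw [Finsupp.sum_fintype _ _ (by intro a; simp)]
    refine Finset.sum_congr rfl fun w _ => ?_
    rw [Finsupp.sum_fintype _ _ (by intro a; simp)]
    rw [Finset.sum_eq_single (z - w)]
    · simp
    · intro b _ hb
      rw [if_neg]
      intro hc
      exact hb (by rw [← hc]; ring)
    · intro h; exact absurd (Finset.mem_univ _) h
  rw [conv, conv]
  rw [← Equiv.sum_comp σ (fun w => f.coeff w * g.coeff (y - w))]
  refine Finset.sum_congr rfl fun w _ => ?_
  have h1 : f.coeff (σ w) = f.coeff w := (hf _ _ ⟨σ, hσ, hσ0, rfl⟩).symm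
  have h2 : g.coeff (y - σ w) = g.coeff (x - w) := by
    have : Req G (x - w) (σ x - σ w) := req_diff hT hσ w x
    rw [hσx] at this
    exact (hg _ _ this).symm
  rw [h1, h2]

/-- a `Req`-closed set. -/
def ReqClosed (G : Subgroup (Equiv.Perm (ZMod p))) (S : Set (ZMod p)) : Prop :=
  ∀ x ∈ S, ∀ y, Req G x y → y ∈ S

lemma classConst_indicator [NeZero p] {q : ℕ} {S : Set (ZMod p)} (hS : ReqClosed G S) :
    ClassConst G (fun x => if x ∈ S then (1 : ZMod q) else 0) := by
  classical
  intro x y hxy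
  by_cases hx : x ∈ S
  · have hy := hS x hx y hxy
    simp [hx, hy]
  · have hy : y ∉ S := fun hy => hx (hS y hy x (req_symm hxy))
    simp [hx, hy]

lemma classConst_one [NeZero p] {q : ℕ} :
    ClassConst G ⇑(1 : AddMonoidAlgebra (ZMod q) (ZMod p)).coeff := by
  classical
  intro x y hxy
  obtain ⟨g, hg, h0, hxy'⟩ := hxy
  have hiff : x = 0 ↔ y = 0 := by
    constructor
    · rintro rfl; rw [← hxy', h0]
    · rintro rfl; rw [← h0] at hxy'; exact g.injective hxy'
  by_cases hx : x = 0
  · have hy := hiff.1 hx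
    simp [AddMonoidAlgebra.one_def, Finsupp.single_apply, hx, hy]
  · have hy : ¬ y = 0 := fun h => hx (hiff.2 h)
    simp [AddMonoidAlgebra.one_def, Finsupp.single_apply, hx, hy, eq_comm]

lemma classConst_pow [NeZero p] {q : ℕ} (hT : Equiv.addLeft (1 : ZMod p) ∈ G)
    {f : AddMonoidAlgebra (ZMod q) (ZMod p)} (hf : ClassConst G ⇑f.coeff) (n : ℕ) :
    ClassConst G ⇑(f ^ n).coeff := by
  induction n with
  | zero => rw [pow_zero]; exact classConst_one
  | succ n ih => rw [pow_succ]; exact classConst_mul hT ih hf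

variable (hp : Fact p.Prime)

lemma reqClosed_qinv_smul [Fact p.Prime] (hT : Equiv.addLeft (1 : ZMod p) ∈ G)
    {q : ℕ} (hq : q.Prime) (hqp : (q : ZMod p) ≠ 0)
    {S : Set (ZMod p)} (hS : ReqClosed G S) :
    ReqClosed G {z | (q : ZMod p)⁻¹ * z ∈ S} := by
  classical
  haveI : Fact q.Prime := ⟨hq⟩
  set A : AddMonoidAlgebra (ZMod q) (ZMod p) :=
    ∑ a ∈ S.toFinset, AddMonoidAlgebra.single a 1 with hAdef
  have hAco : ⇑A.coeff = fun z => if z ∈ S then (1 : ZMod q) else 0 := by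
    funext z
    show (∑ a ∈ S.toFinset, AddMonoidAlgebra.single a (1 : ZMod q)).coeff z = _
    rw [AddMonoidAlgebra.coeff_sum, Finsupp.finset_sum_apply]
    rw [Finset.sum_congr rfl fun a _ => AddMonoidAlgebra.coeff_single_apply]
    rw [Finset.sum_ite_eq']
    simp [Set.mem_toFinset]
  have hA : ClassConst G ⇑A.coeff := by
    rw [hAco]; exact classConst_indicator hS
  haveI : CharP (AddMonoidAlgebra (ZMod q) (ZMod p)) q := by
    refine charP_of_injective_ringHom
      (f := (AddMonoidAlgebra.singleZeroRingHom : ZMod q →+* AddMonoidAlgebra (ZMod q) (ZMod p)))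
      ?_ q
    intro a b hab
    have := congrFun (congrArg (fun f : AddMonoidAlgebra (ZMod q) (ZMod p) => ⇑f.coeff) hab) 0
    simpa [AddMonoidAlgebra.singleZeroRingHom] using this
  have hpowA : ClassConst G ⇑(A ^ q).coeff := classConst_pow hT hA q
  have hform : ⇑(A ^ q).coeff = fun z => if (q : ZMod p)⁻¹ * z ∈ S then (1 : ZMod q) else 0 := by
    have h1 : A ^ q = ∑ a ∈ S.toFinset,
        AddMonoidAlgebra.single ((q : ZMod p) * a) (1 : ZMod q) := by
      rw [hAdef, sum_pow_char]
      refine Finset.sum_congr rfl fun a _ => ?_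
      rw [AddMonoidAlgebra.single_pow, one_pow, nsmul_eq_mul]
    funext z
    rw [h1]
    show (∑ a ∈ S.toFinset, AddMonoidAlgebra.single ((q : ZMod p) * a) (1 : ZMod q)).coeff z = _
    rw [AddMonoidAlgebra.coeff_sum, Finsupp.finset_sum_apply]
    have hterm : ∀ a : ZMod p,
        (AddMonoidAlgebra.single ((q : ZMod p) * a) (1 : ZMod q)).coeff z
          = if a = (q : ZMod p)⁻¹ * z then 1 else 0 := by
      intro a
      rw [AddMonoidAlgebra.coeff_single_apply]
      refine if_congr ?_ rfl rfl
      constructor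
      · rintro rfl
        rw [inv_mul_cancel_left₀ hqp]
      · rintro rfl
        rw [mul_inv_cancel_left₀ hqp]
    rw [Finset.sum_congr rfl fun a _ => hterm a, Finset.sum_ite_eq']
    simp [Set.mem_toFinset]
  intro x hx y hxy
  have heq := hpowA x y hxy
  rw [hform] at heq
  have heq2 : (if (q : ZMod p)⁻¹ * x ∈ S then (1 : ZMod q) else 0)
      = (if (q : ZMod p)⁻¹ * y ∈ S then (1 : ZMod q) else 0) := heq
  simp only [Set.mem_setOf_eq] at hx ⊢
  by_contra hy
  rw [if_pos hx, if_neg hy] at heq2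
  exact one_ne_zero heq2

lemma reqClosed_minv_smul [Fact p.Prime] (hT : Equiv.addLeft (1 : ZMod p) ∈ G) :
    ∀ m : ℕ, (m : ZMod p) ≠ 0 → ∀ S : Set (ZMod p), ReqClosed G S →
      ReqClosed G {z | ((m : ZMod p))⁻¹ * z ∈ S} := by
  intro m
  induction m using Nat.strong_induction_on with
  | _ m ih =>
    intro hm S hS
    rcases eq_or_ne m 1 with rfl | hm1
    · simpa using hS
    have hm0 : m ≠ 0 := by rintro rfl; simp at hm
    set q := m.minFac with hqdef
    have hq : q.Prime := Nat.minFac_prime hm1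
    set k := m / q with hkdef
    have hmk : m = q * k := (Nat.div_mul_cancel m.minFac_dvd).symm.trans (mul_comm _ _)
    have hklt : k < m := by
      have h2 : 2 ≤ q := hq.two_le
      have hk0 : k ≠ 0 := by
        rintro h
        rw [hmk, h, mul_zero] at hm0; exact hm0 rfl
      calc k < 2 * k := by omega
        _ ≤ q * k := Nat.mul_le_mul_right k h2
        _ = m := hmk.symm
    have hcast : (m : ZMod p) = (q : ZMod p) * (k : ZMod p) := by
      rw [hmk]; push_cast; ring
    have hqp : (q : ZMod p) ≠ 0 := fun h => hm (by rw [hcast, h, zero_mul])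
    have hkp : (k : ZMod p) ≠ 0 := fun h => hm (by rw [hcast, h, mul_zero])
    have hSk := ih k hklt hkp S hS
    have hstep := reqClosed_qinv_smul hT hq hqp hSk
    have hseteq : {z : ZMod p | ((m : ZMod p))⁻¹ * z ∈ S}
        = {z : ZMod p | (q : ZMod p)⁻¹ * z ∈ {w : ZMod p | ((k : ZMod p))⁻¹ * w ∈ S}} := by
      ext z
      simp only [Set.mem_setOf_eq]
      rw [hcast, mul_inv_rev, mul_assoc]
    rw [hseteq]
    exact hstep

/-- All classes of nonzero points have the same size. -/
lemma req_classes_ncard [Fact p.Prime] (hT : Equiv.addLeft (1 : ZMod p) ∈ G)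
    {x y : ZMod p} (hx : x ≠ 0) (hy : y ≠ 0) :
    Set.ncard {z | Req G x z} = Set.ncard {z | Req G y z} := by
  have main : ∀ a b : ZMod p, a ≠ 0 → b ≠ 0 →
      Set.ncard {z | Req G b z} ≤ Set.ncard {z | Req G a z} := by
    intro a b ha hb
    set m : ZMod p := b * a⁻¹ with hmdef
    have hm : m ≠ 0 := mul_ne_zero hb (inv_ne_zero ha)
    have hmcast : ((m.val : ℕ) : ZMod p) = m := ZMod.natCast_rightInverse m
    have hmval : ((m.val : ℕ) : ZMod p) ≠ 0 := by rw [hmcast]; exact hm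
    have hcl : ReqClosed G {z | Req G a z} := fun s hs t hst => req_trans hs hst
    have hclosed := reqClosed_minv_smul hT m.val hmval _ hcl
    rw [hmcast] at hclosed
    set T : Set (ZMod p) := {z | m⁻¹ * z ∈ {z | Req G a z}} with hTdef
    have hma : m⁻¹ * b = a := by
      rw [hmdef, mul_inv_rev, inv_inv, mul_assoc, inv_mul_cancel₀ hb, mul_one]
    have hbT : b ∈ T := by
      show m⁻¹ * b ∈ {z | Req G a z}
      rw [hma]
      exact req_refl G a
    have hsub : {z | Req G b z} ⊆ T := fun z hz => hclosed b hbT z hz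
    have hTcard : T.ncard = Set.ncard {z | Req G a z} := by
      have himg : T = (fun z => m * z) '' {z | Req G a z} := by
        ext z
        constructor
        · intro hz
          refine ⟨m⁻¹ * z, hz, ?_⟩
          show m * (m⁻¹ * z) = z
          rw [mul_inv_cancel_left₀ hm]
        · rintro ⟨w, hw, rfl⟩
          show m⁻¹ * (m * w) ∈ {z | Req G a z}
          rw [inv_mul_cancel_left₀ hm]
          exact hw
      rw [himg, Set.ncard_image_of_injective _ (mul_right_injective₀ hm)]
    calc Set.ncard {z | Req G b z} ≤ T.ncard :=
          Set.ncard_le_ncard hsub (Set.toFinite T)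
      _ = _ := hTcard
  exact le_antisymm (main y x hy hx) (main x y hx hy)

/-- The common class size divides the size of any `Req`-closed set of nonzero elements. -/
lemma class_ncard_dvd_reqClosed [Fact p.Prime] (hT : Equiv.addLeft (1 : ZMod p) ∈ G)
    {S : Set (ZMod p)} (hS : ReqClosed G S) (h0 : (0 : ZMod p) ∉ S)
    {x₀ : ZMod p} (hx₀ : x₀ ≠ 0) :
    Set.ncard {z | Req G x₀ z} ∣ S.ncard := by
  classical
  set d := Set.ncard {z | Req G x₀ z} with hd
  set f : ZMod p → Set (ZMod p) := fun a => {z | Req G a z} with hf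
  have hcard := Finset.card_eq_sum_card_fiberwise
    (f := f) (s := S.toFinset) (t := S.toFinset.image f)
    (fun x hx => Finset.mem_image_of_mem f hx)
  have hfib : ∀ b ∈ S.toFinset.image f,
      (S.toFinset.filter fun x => f x = b).card = d := by
    intro b hb
    obtain ⟨a, ha, rfl⟩ := Finset.mem_image.1 hb
    have haS : a ∈ S := Set.mem_toFinset.1 ha
    have ha0 : a ≠ 0 := fun h => h0 (h ▸ haS)
    have hfeq : (S.toFinset.filter fun x => f x = f a) = (f a).toFinset := by
      ext x
      simp only [Finset.mem_filter, Set.mem_toFinset]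
      constructor
      · rintro ⟨hxS, hfx⟩
        show x ∈ f a
        rw [← hfx]
        exact req_refl G x
      · intro hx
        refine ⟨hS a haS x hx, ?_⟩
        ext z
        simp only [hf, Set.mem_setOf_eq]
        exact ⟨fun h => req_trans hx h, fun h => req_trans (req_symm hx) h⟩
    rw [hfeq, ← Set.ncard_eq_toFinset_card', hd]
    exact (req_classes_ncard hT ha0 hx₀)
  rw [Finset.sum_congr rfl hfib, Finset.sum_const, smul_eq_mul] at hcard
  rw [Set.ncard_eq_toFinset_card', hcard]
  exact dvd_mul_left d _


variable {V : Type*} [Fintype V] {Γ : SimpleGraph V}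

/-- common neighbours -/
def Cmn (Γ : SimpleGraph V) (v u : V) : Set V := {x | Γ.Adj v x ∧ Γ.Adj u x}

/-- neighbours of `u` that are neither `v` nor adjacent to `v`. -/
def Ncm (Γ : SimpleGraph V) (v u : V) : Set V := {x | Γ.Adj u x ∧ x ≠ v ∧ ¬ Γ.Adj v x}

lemma common_image (φ : Γ ≃g Γ) (v u : V) :
    (⇑φ '' Cmn Γ v u) = Cmn Γ (φ v) (φ u) := by
  ext x
  constructor
  · rintro ⟨y, ⟨h1, h2⟩, rfl⟩
    exact ⟨φ.map_adj_iff.2 h1, φ.map_adj_iff.2 h2⟩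
  · rintro ⟨h1, h2⟩
    refine ⟨φ.symm x, ⟨?_, ?_⟩, by simp⟩
    · rw [← φ.map_adj_iff]
      simpa using h1
    · rw [← φ.map_adj_iff]
      simpa using h2

lemma ncard_common_congr (φ : Γ ≃g Γ) (v u : V) :
    (Cmn Γ (φ v) (φ u)).ncard = (Cmn Γ v u).ncard := by
  rw [← common_image, Set.ncard_image_of_injective _ φ.injective]

lemma lambda_const (hA : ArcTransitive Γ) {v u v' u' : V}
    (h : Γ.Adj v u) (h' : Γ.Adj v' u') :
    (Cmn Γ v u).ncard = (Cmn Γ v' u').ncard := by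
  obtain ⟨φ, hv, hu⟩ := hA h h'
  rw [← hv, ← hu, ncard_common_congr]

lemma neigh_split {v u : V} (h : Γ.Adj v u) :
    (Γ.neighborSet u).ncard = 1 + (Cmn Γ v u).ncard + (Ncm Γ v u).ncard := by
  classical
  have hsplit : Γ.neighborSet u = insert v (Cmn Γ v u ∪ Ncm Γ v u) := by
    ext x
    simp only [mem_neighborSet, Set.mem_insert_iff, Set.mem_union]
    constructor
    · intro hx
      by_cases hxv : x = v
      · exact Or.inl hxv
      · by_cases hvx : Γ.Adj v x
        · exact Or.inr (Or.inl ⟨hvx, hx⟩)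
        · exact Or.inr (Or.inr ⟨hx, hxv, hvx⟩)
    · rintro (rfl | ⟨_, h2⟩ | ⟨h1, _, _⟩)
      · exact h.symm
      · exact h2
      · exact h1
  have hvnot : v ∉ Cmn Γ v u ∪ Ncm Γ v u := by
    rintro (⟨h1, _⟩ | ⟨_, h2, _⟩)
    · exact Γ.loopless.irrefl _ h1
    · exact h2 rfl
  have hdisj : Disjoint (Cmn Γ v u) (Ncm Γ v u) := by
    rw [Set.disjoint_left]
    rintro x ⟨h1, _⟩ ⟨_, _, h3⟩
    exact h3 h1
  rw [hsplit, Set.ncard_insert_of_notMem hvnot (Set.toFinite _),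
    Set.ncard_union_eq hdisj (Set.toFinite _) (Set.toFinite _)]
  ring

lemma exists_arc (hp : 0 < p) (hreg : ∀ v : V, (Γ.neighborSet v).ncard = p)
    (hne : Nonempty V) : ∃ v u : V, Γ.Adj v u := by
  obtain ⟨v⟩ := hne
  have : (Γ.neighborSet v).Nonempty := by
    rw [← Set.ncard_pos (Set.toFinite _), hreg v]; exact hp
  obtain ⟨u, hu⟩ := this
  exact ⟨v, u, (Γ.mem_neighborSet v u).1 hu⟩

/-- If there are no triangles, 2-geodesic transitivity gives 2-arc transitivity. -/
lemma lambda_pos (h2gt : TwoGeodesicTransitive Γ) (h2at : ¬ TwoArcTransitive Γ)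
    {v u : V} (h : Γ.Adj v u) : 0 < (Cmn Γ v u).ncard := by
  by_contra hl
  push_neg at hl
  have hzero : (Cmn Γ v u).ncard = 0 := Nat.le_zero.1 hl
  have hempty : ∀ {a b : V}, Γ.Adj a b → Cmn Γ a b = ∅ := by
    intro a b hab
    have := lambda_const h2gt.1 hab h
    rw [hzero] at this
    exact ((Set.ncard_eq_zero (Set.toFinite _)).1 this)
  refine h2at ⟨h2gt.1, ?_⟩
  intro a b c a' b' c' h1 h2
  have hg : ∀ {x y z : V}, Is2Arc Γ x y z → Is2Geodesic Γ x y z := by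
    rintro x y z ⟨hxy, hyz, hxz⟩
    refine ⟨hxy, hyz, hxz, fun hadj => ?_⟩
    have : z ∈ Cmn Γ x y := ⟨hadj, hyz⟩
    rw [hempty hxy] at this
    exact this
  exact h2gt.2 (hg h1) (hg h2)

lemma reach_closed_nbhd
    (hcl : ∀ {a b : V}, Γ.Adj a b → Γ.neighborSet a ∪ {a} = Γ.neighborSet b ∪ {b})
    {a b : V} (hr : Γ.Reachable a b) :
    Γ.neighborSet a ∪ {a} = Γ.neighborSet b ∪ {b} := by
  obtain ⟨w⟩ := hr
  induction w with
  | nil => rfl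
  | cons hadj _ ih => exact (hcl hadj).trans ih

lemma ncm_pos (hp : Nat.Prime p) (hreg : ∀ v : V, (Γ.neighborSet v).ncard = p)
    (hA : ArcTransitive Γ) (hconn : Γ.Connected) (hnc : Γ ≠ ⊤)
    {v u : V} (h : Γ.Adj v u) : 0 < (Ncm Γ v u).ncard := by
  by_contra hn
  push_neg at hn
  have hzero : (Ncm Γ v u).ncard = 0 := Nat.le_zero.1 hn
  have hempty : ∀ {a b : V}, Γ.Adj a b → Ncm Γ a b = ∅ := by
    intro a b hab
    have h1 := neigh_split hab
    have h2 := neigh_split h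
    rw [hreg] at h1 h2
    rw [lambda_const hA hab h] at h1
    rw [hzero] at h2
    have : (Ncm Γ a b).ncard = 0 := by omega
    exact (Set.ncard_eq_zero (Set.toFinite _)).1 this
  have hcl : ∀ {a b : V}, Γ.Adj a b → Γ.neighborSet a ∪ {a} = Γ.neighborSet b ∪ {b} := by
    have key : ∀ {a b : V}, Γ.Adj a b → Γ.neighborSet a ∪ {a} ⊆ Γ.neighborSet b ∪ {b} := by
      intro a b hab x hx
      rcases hx with hx | hx
      · by_cases hxb : x = b
        · exact Or.inr hxb
        · by_cases hbx : Γ.Adj b x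
          · exact Or.inl hbx
          · exfalso
            have hmem : x ∈ Ncm Γ b a := ⟨hx, hxb, hbx⟩
            rw [hempty hab.symm] at hmem
            exact hmem
      · simp only [Set.mem_singleton_iff] at hx
        subst hx
        exact Or.inl hab.symm
    intro a b hab
    exact (key hab).antisymm (key hab.symm)
  have htop : Γ = ⊤ := by
    ext a b
    simp only [top_adj]
    constructor
    · exact fun h' => h'.ne
    · intro hne
      have heq := reach_closed_nbhd hcl (hconn.preconnected a b)
      have hb : b ∈ Γ.neighborSet a ∪ {a} := by
        rw [heq]; exact Or.inr rfl
      rcases hb with hb | hb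
      · exact hb
      · simp only [Set.mem_singleton_iff] at hb
        exact absurd hb hne.symm
  exact hnc htop

lemma geo_transport (h2gt : TwoGeodesicTransitive Γ) {v u w v' u' w' : V}
    (hg : Is2Geodesic Γ v u w) (hg' : Is2Geodesic Γ v' u' w') :
    (Cmn Γ v w).ncard = (Cmn Γ v' w').ncard := by
  obtain ⟨φ, hv, -, hw⟩ := h2gt.2 hg hg'
  rw [← hv, ← hw, ncard_common_congr]

lemma exists_geodesic {v u : V} (h : Γ.Adj v u) (hpos : 0 < (Ncm Γ v u).ncard) :
    ∃ w, Is2Geodesic Γ v u w := by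
  have : (Ncm Γ v u).Nonempty := by
    rw [← Set.ncard_pos (Set.toFinite _)]; exact hpos
  obtain ⟨w, h1, h2, h3⟩ := this
  exact ⟨w, h, h1, fun hvw => h2 hvw.symm, h3⟩

/-- vertices at distance two. -/
def Dset (Γ : SimpleGraph V) (u : V) : Set V :=
  {x | x ≠ u ∧ ¬ Γ.Adj u x ∧ ∃ m, Γ.Adj u m ∧ Γ.Adj m x}

lemma double_count {p n c : ℕ}
    (hreg : ∀ v : V, (Γ.neighborSet v).ncard = p)
    (hn : ∀ ⦃a b : V⦄, Γ.Adj a b → (Ncm Γ a b).ncard = n)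
    (hc : ∀ ⦃a b x : V⦄, Is2Geodesic Γ a b x → (Cmn Γ a x).ncard = c)
    (u : V) : p * n = (Dset Γ u).ncard * c := by
  classical
  set A := (Γ.neighborSet u).toFinset with hA
  set B := (Dset Γ u).toFinset with hB
  have hswap : ∑ m ∈ A, (B.filter (fun x => Γ.Adj m x)).card
      = ∑ x ∈ B, (A.filter (fun m => Γ.Adj m x)).card := by
    simp only [Finset.card_filter]
    exact Finset.sum_comm
  have hleft : ∀ m ∈ A, (B.filter (fun x => Γ.Adj m x)).card = n := by
    intro m hm
    have hum : Γ.Adj u m := by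
      rw [hA, Set.mem_toFinset] at hm; exact hm
    have hfeq : B.filter (fun x => Γ.Adj m x) = (Ncm Γ u m).toFinset := by
      ext x
      simp only [Finset.mem_filter, hB, Set.mem_toFinset]
      constructor
      · rintro ⟨⟨h1, h2, -⟩, h4⟩
        exact ⟨h4, h1, h2⟩
      · rintro ⟨h1, h2, h3⟩
        exact ⟨⟨h2, h3, m, hum, h1⟩, h1⟩
    rw [hfeq, ← Set.ncard_eq_toFinset_card']
    exact hn hum
  have hright : ∀ x ∈ B, (A.filter (fun m => Γ.Adj m x)).card = c := by
    intro x hx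
    rw [hB, Set.mem_toFinset] at hx
    obtain ⟨hxu, hux, m₀, hm₀, hm₀x⟩ := hx
    have hfeq : A.filter (fun m => Γ.Adj m x) = (Cmn Γ u x).toFinset := by
      ext m
      simp only [Finset.mem_filter, hA, Set.mem_toFinset]
      constructor
      · rintro ⟨h1, h2⟩
        exact ⟨h1, h2.symm⟩
      · rintro ⟨h1, h2⟩
        exact ⟨h1, h2.symm⟩
    rw [hfeq, ← Set.ncard_eq_toFinset_card']
    exact hc ⟨hm₀, hm₀x, Ne.symm hxu, hux⟩
  calc p * n = ∑ m ∈ A, n := by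
        rw [Finset.sum_const, smul_eq_mul, hA, ← Set.ncard_eq_toFinset_card', hreg]
    _ = ∑ m ∈ A, (B.filter (fun x => Γ.Adj m x)).card :=
        (Finset.sum_congr rfl hleft).symm
    _ = ∑ x ∈ B, (A.filter (fun m => Γ.Adj m x)).card := hswap
    _ = ∑ x ∈ B, c := Finset.sum_congr rfl hright
    _ = (Dset Γ u).ncard * c := by
        rw [Finset.sum_const, smul_eq_mul, hB, ← Set.ncard_eq_toFinset_card']

lemma c_lower {p n l c : ℕ}
    (hreg : ∀ v : V, (Γ.neighborSet v).ncard = p)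
    (hl : ∀ ⦃a b : V⦄, Γ.Adj a b → (Cmn Γ a b).ncard = l)
    (hsplit : p = 1 + l + n)
    {v u w : V} (hg : Is2Geodesic Γ v u w) (hcval : (Cmn Γ v w).ncard = c) :
    p + 1 ≤ c + 2 * n := by
  obtain ⟨hvu, huw, hvw, hnadj⟩ := hg
  set A := Cmn Γ v u with hA
  set B := Cmn Γ w u with hB
  have hAc : A.ncard = l := hl hvu
  have hBc : B.ncard = l := hl (huw.symm)
  have hU : A ∪ B ⊆ Γ.neighborSet u \ {v, w} := by
    rintro x (⟨h1, h2⟩ | ⟨h1, h2⟩)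
    · refine ⟨h2, ?_⟩
      rintro (rfl | rfl)
      · exact Γ.loopless.irrefl _ h1
      · exact hnadj h1
    · refine ⟨h2, ?_⟩
      rintro (rfl | rfl)
      · exact hnadj h1.symm
      · exact Γ.loopless.irrefl _ h1
  have hpairsub : ({v, w} : Set V) ⊆ Γ.neighborSet u := by
    rintro x (rfl | rfl)
    · exact hvu.symm
    · exact huw
  have hdiffcard : (Γ.neighborSet u \ {v, w}).ncard + 2 = p := by
    have h2 := Set.ncard_diff_add_ncard_of_subset hpairsub (Set.toFinite _)
    rw [Set.ncard_pair hvw, hreg] at h2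
    exact h2
  have hUcard : (A ∪ B).ncard + 2 ≤ p := by
    have h3 := Set.ncard_le_ncard hU (Set.toFinite _)
    omega
  have hIU : (A ∩ B).ncard + (A ∪ B).ncard = l + l := by
    rw [Set.ncard_inter_add_ncard_union _ _ (Set.toFinite _) (Set.toFinite _), hAc, hBc]
  have hins : (A ∩ B).ncard + 1 ≤ c := by
    have hsub : insert u (A ∩ B) ⊆ Cmn Γ v w := by
      rintro x (rfl | ⟨⟨h1, -⟩, ⟨h3, -⟩⟩)
      · exact ⟨hvu, huw.symm⟩
      · exact ⟨h1, h3⟩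
    have hunotin : u ∉ A ∩ B := by
      rintro ⟨⟨-, h2⟩, -⟩
      exact Γ.loopless.irrefl u h2
    have h1 := Set.ncard_le_ncard hsub (Set.toFinite _)
    rw [Set.ncard_insert_of_notMem hunotin (Set.toFinite _), hcval] at h1
    omega
  omega

lemma c_ne_p {p n l c : ℕ} (hp : Nat.Prime p)
    (hreg : ∀ v : V, (Γ.neighborSet v).ncard = p)
    (hn : ∀ ⦃a b : V⦄, Γ.Adj a b → (Ncm Γ a b).ncard = n)
    (hc : ∀ ⦃a b x : V⦄, Is2Geodesic Γ a b x → (Cmn Γ a x).ncard = c)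
    (hsplit : p = 1 + l + n) (hlpos : 0 < l) (hnpos : 0 < n)
    (u₀ : V) : c ≠ p := by
  classical
  intro hcp
  have htwin : ∀ ⦃a b x : V⦄, Is2Geodesic Γ a b x →
      Γ.neighborSet a = Γ.neighborSet x := by
    intro a b x hg
    have hcard := hc hg
    rw [hcp] at hcard
    have h1 : Cmn Γ a x ⊆ Γ.neighborSet a := fun y hy => hy.1
    have h2 : Cmn Γ a x ⊆ Γ.neighborSet x := fun y hy => hy.2
    have e1 : Cmn Γ a x = Γ.neighborSet a :=
      Set.eq_of_subset_of_ncard_le h1 (by rw [hcard, hreg]) (Set.toFinite _)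
    have e2 : Cmn Γ a x = Γ.neighborSet x :=
      Set.eq_of_subset_of_ncard_le h2 (by rw [hcard, hreg]) (Set.toFinite _)
    rw [← e1, e2]
  have hDn : ∀ z : V, (Dset Γ z).ncard = n := by
    intro z
    have hdc := double_count hreg hn hc z
    rw [hcp, mul_comm p n] at hdc
    exact Nat.eq_of_mul_eq_mul_right hp.pos hdc.symm
  have hcls : ∀ z : V, {y | Γ.neighborSet y = Γ.neighborSet z} = insert z (Dset Γ z) := by
    intro z
    ext y
    simp only [Set.mem_setOf_eq, Set.mem_insert_iff]
    constructor
    · intro hy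
      by_cases hyz : y = z
      · exact Or.inl hyz
      · refine Or.inr ⟨hyz, ?_, ?_⟩
        · intro hadj
          have hmem : z ∈ Γ.neighborSet y := (Γ.mem_neighborSet y z).2 hadj.symm
          rw [hy] at hmem
          exact Γ.loopless.irrefl z ((Γ.mem_neighborSet z z).1 hmem)
        · have hnon : (Γ.neighborSet z).Nonempty := by
            rw [← Set.ncard_pos (Set.toFinite _), hreg]; exact hp.pos
          obtain ⟨m, hm⟩ := hnon
          refine ⟨m, (Γ.mem_neighborSet z m).1 hm, ?_⟩
          have hmem : m ∈ Γ.neighborSet y := by rw [hy]; exact hm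
          exact ((Γ.mem_neighborSet y m).1 hmem).symm
    · rintro (rfl | hyD)
      · rfl
      · obtain ⟨hyz, hzy, m, hm1, hm2⟩ := hyD
        exact (htwin ⟨hm1, hm2, Ne.symm hyz, hzy⟩).symm
  set A := (Γ.neighborSet u₀).toFinset with hA
  set f : V → Set V := fun y => Γ.neighborSet y with hf
  have hcardsum := Finset.card_eq_sum_card_fiberwise
    (f := f) (s := A) (t := A.image f) (fun x hx => Finset.mem_image_of_mem f hx)
  have hfib : ∀ b ∈ A.image f, (A.filter fun x => f x = b).card = 1 + n := by
    intro b hb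
    obtain ⟨y₀, hy₀, rfl⟩ := Finset.mem_image.1 hb
    have hy₀A : Γ.Adj u₀ y₀ := by
      rw [hA, Set.mem_toFinset] at hy₀; exact hy₀
    have hfeq : (A.filter fun x => f x = f y₀)
        = {y | Γ.neighborSet y = Γ.neighborSet y₀}.toFinset := by
      ext x
      simp only [Finset.mem_filter, hA, Set.mem_toFinset, Set.mem_setOf_eq, hf]
      constructor
      · rintro ⟨-, h2⟩; exact h2
      · intro h2
        refine ⟨?_, h2⟩
        have hmem : u₀ ∈ Γ.neighborSet x := by rw [h2]; exact hy₀A.symm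
        exact ((Γ.mem_neighborSet x u₀).1 hmem).symm
    rw [hfeq, ← Set.ncard_eq_toFinset_card', hcls y₀,
      Set.ncard_insert_of_notMem (fun hy => hy.1 rfl) (Set.toFinite _), hDn]
    omega
  rw [Finset.sum_congr rfl hfib, Finset.sum_const, smul_eq_mul] at hcardsum
  have hAcard : A.card = p := by
    rw [hA, ← Set.ncard_eq_toFinset_card', hreg]
  have hdvd : (1 + n) ∣ p := by
    rw [← hAcard, hcardsum]; exact dvd_mul_left _ _
  rcases hp.eq_one_or_self_of_dvd _ hdvd with h1 | h1 <;> omega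


section Perm

lemma perm_order_p_eq_one {α : Type*} [Finite α] {p : ℕ} (hp : p.Prime)
    (hcard : Nat.card α = p) {σ : Equiv.Perm α} (hσ : orderOf σ = p)
    {x : α} (hfix : σ x = x) : σ = 1 := by
  classical
  haveI : Fact p.Prime := ⟨hp⟩
  have hpow : ∀ m : ℕ, (σ ^ m) x = x := by
    intro m
    induction m with
    | zero => rfl
    | succ m ih => rw [pow_succ, Equiv.Perm.mul_apply, hfix, ih]
  set H := Subgroup.zpowers σ with hH
  have hpg : IsPGroup p H := IsPGroup.of_card (by rw [Nat.card_zpowers, hσ, pow_one])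
  have hmod := hpg.card_modEq_card_fixedPoints α
  have hxfix : x ∈ MulAction.fixedPoints H α := by
    intro g
    obtain ⟨k, hk⟩ := g.2
    show (g : Equiv.Perm α) x = x
    rw [← hk]
    show ((σ ^ k)) x = x
    rcases k with n | n
    · simpa using hpow n
    · rw [zpow_negSucc]
      have h1 := hpow (n + 1)
      calc ((σ ^ (n + 1))⁻¹) x = ((σ ^ (n + 1))⁻¹) ((σ ^ (n + 1)) x) := by rw [h1]
        _ = x := Equiv.symm_apply_apply _ _
  have h1 : 0 < Nat.card (MulAction.fixedPoints H α) := by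
    haveI : Nonempty (MulAction.fixedPoints H α) := ⟨⟨x, hxfix⟩⟩
    exact Nat.card_pos
  have hle : (MulAction.fixedPoints H α).ncard ≤ p := by
    rw [← hcard, ← Set.ncard_univ]
    exact Set.ncard_le_ncard (Set.subset_univ _) (Set.toFinite _)
  have hdvd : p ∣ Nat.card (MulAction.fixedPoints H α) := by
    rw [hcard] at hmod
    have h0 : Nat.card (MulAction.fixedPoints H α) ≡ 0 [MOD p] :=
      hmod.symm.trans ((Nat.modEq_zero_iff_dvd).2 dvd_rfl)
    exact (Nat.modEq_zero_iff_dvd).1 h0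
  have hcards : (MulAction.fixedPoints H α).ncard = p := by
    rw [← Nat.card_coe_set_eq] at hle ⊢
    exact le_antisymm hle (Nat.le_of_dvd h1 hdvd)
  have huniv : MulAction.fixedPoints H α = Set.univ := by
    refine Set.eq_of_subset_of_ncard_le (Set.subset_univ _) ?_ (Set.toFinite _)
    rw [Set.ncard_univ, hcard, hcards]
  ext y
  have hy : y ∈ MulAction.fixedPoints H α := by rw [huniv]; trivial
  have := hy ⟨σ, Subgroup.mem_zpowers σ⟩
  simpa using this

lemma pow_apply_inj {α : Type*} [Finite α] {p : ℕ} (hp : p.Prime)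
    (hcard : Nat.card α = p) {σ : Equiv.Perm α} (hσ : orderOf σ = p) (x₀ : α) :
    ∀ a b : ℕ, a ≤ b → b < p → (σ ^ a) x₀ = (σ ^ b) x₀ → a = b := by
  intro a b hab hbp heq
  by_contra hne
  set d := b - a with hd
  have hdpos : 0 < d := by omega
  have hdlt : d < p := by omega
  have hfix : (σ ^ d) x₀ = x₀ := by
    have h2 : (σ ^ a) ((σ ^ d) x₀) = (σ ^ a) x₀ := by
      rw [← Equiv.Perm.mul_apply, ← pow_add]
      have : a + d = b := by omega
      rw [this, heq]
    exact (σ ^ a).injective h2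
  have hord : orderOf (σ ^ d) = p := by
    rw [orderOf_pow, hσ]
    have hcop : Nat.gcd p d = 1 := Nat.Coprime.gcd_eq_one
      (hp.coprime_iff_not_dvd.2 (Nat.not_dvd_of_pos_of_lt hdpos hdlt))
    rw [hcop, Nat.div_one]
  have : (σ ^ d) = 1 := perm_order_p_eq_one hp hcard hord hfix
  rw [this, orderOf_one] at hord
  exact hp.one_lt.ne hord

lemma bij_f {α : Type*} [Fintype α] {p : ℕ} (hp : p.Prime) [NeZero p]
    (hcard : Nat.card α = p) {σ : Equiv.Perm α} (hσ : orderOf σ = p) (x₀ : α) :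
    Function.Bijective (fun k : ZMod p => (σ ^ (ZMod.val k)) x₀) := by
  rw [Fintype.bijective_iff_injective_and_card]
  constructor
  · intro k k' hkk
    simp only at hkk
    rcases le_total (ZMod.val k) (ZMod.val k') with h | h
    · have := pow_apply_inj hp hcard hσ x₀ _ _ h (ZMod.val_lt k') hkk
      exact ZMod.val_injective p this
    · have := pow_apply_inj hp hcard hσ x₀ _ _ h (ZMod.val_lt k) hkk.symm
      exact (ZMod.val_injective p this).symm
  · rw [ZMod.card, ← hcard, Nat.card_eq_fintype_card]

end Perm

section Restrict

variable {V : Type*} (Γ : SimpleGraph V)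

/-- restriction of an automorphism fixing `u` to the neighbourhood of `u`. -/
def restrictAut (u : V) (φ : Γ ≃g Γ) (hu : φ u = u) :
    Equiv.Perm ↥(Γ.neighborSet u) :=
  Equiv.subtypeEquiv φ.toEquiv (fun x => by
    rw [SimpleGraph.mem_neighborSet, SimpleGraph.mem_neighborSet]
    constructor
    · intro h
      have h2 := φ.map_adj_iff.2 h
      rwa [hu] at h2
    · intro h
      rw [← hu] at h
      exact φ.map_adj_iff.1 h)

lemma restrictAut_coe (u : V) (φ : Γ ≃g Γ) (hu : φ u = u)
    (x : ↥(Γ.neighborSet u)) : ((restrictAut Γ u φ hu) x : V) = φ (x : V) := rfl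

/-- the subgroup of permutations of the neighbourhood induced by automorphisms fixing `u`. -/
def autSubgroup (u : V) : Subgroup (Equiv.Perm ↥(Γ.neighborSet u)) where
  carrier := {π | ∃ φ : Γ ≃g Γ, ∃ hu : φ u = u, π = restrictAut Γ u φ hu}
  one_mem' := by
    refine ⟨RelIso.refl _, rfl, ?_⟩
    apply Equiv.ext
    intro x
    apply Subtype.ext
    rfl
  mul_mem' := by
    rintro π π' ⟨φ, hu, rfl⟩ ⟨φ', hu', rfl⟩
    refine ⟨φ'.trans φ, ?_, ?_⟩
    · show φ (φ' u) = u
      rw [hu', hu]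
    · apply Equiv.ext
      intro x
      apply Subtype.ext
      rfl
  inv_mem' := by
    rintro π ⟨φ, hu, rfl⟩
    have hus : φ.symm u = u := by
      conv_lhs => rw [← hu]
      exact φ.symm_apply_apply u
    refine ⟨φ.symm, hus, ?_⟩
    refine inv_eq_of_mul_eq_one_left ?_
    apply Equiv.ext
    intro x
    apply Subtype.ext
    show φ.symm (φ (x : V)) = (x : V)
    exact φ.symm_apply_apply _

/-- conjugating permutations through an equivalence, as a monoid hom. -/
def permConj {α β : Type*} (e : α ≃ β) : Equiv.Perm α →* Equiv.Perm β where
  toFun π := (e.symm.trans π).trans e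
  map_one' := by
    apply Equiv.ext
    intro k
    simp
  map_mul' := by
    intro a b
    apply Equiv.ext
    intro k
    simp [Equiv.Perm.mul_apply]

lemma permConj_apply {α β : Type*} (e : α ≃ β) (π : Equiv.Perm α) (b : β) :
    permConj e π b = e (π (e.symm b)) := rfl

end Restrict

end StmtAux

end StmtAuxSection

open StmtAux

theorem stmt1 {V : Type*} [Fintype V] (Γ : SimpleGraph V) (p : ℕ)
    (hp : p.Prime)
    (hreg : ∀ v : V, Nat.card (Γ.neighborSet v) = p)
    (hconn : Γ.Connected)
    (hnc : Γ ≠ ⊤)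
    (h2gt : TwoGeodesicTransitive Γ)
    (h2at : ¬ TwoArcTransitive Γ) :
    ∀ v u : V, Γ.Adj v u →
      Nat.card {x : V | Γ.Adj v x ∧ Γ.Adj u x} = (p - 1) / 2 := by
  classical
  haveI hfact : Fact p.Prime := ⟨hp⟩
  haveI : NeZero p := ⟨hp.ne_zero⟩
  haveI : Fact (1 < p) := ⟨hp.one_lt⟩
  have hreg' : ∀ v : V, (Γ.neighborSet v).ncard = p := fun v => by
    rw [← Nat.card_coe_set_eq]; exact hreg v
  intro v u hvu
  have harc := h2gt.1
  have hgoal : Nat.card {x : V | Γ.Adj v x ∧ Γ.Adj u x} = (Cmn Γ v u).ncard :=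
    Nat.card_coe_set_eq _
  rw [hgoal]
  -- the basic parameters
  set l := (Cmn Γ v u).ncard with hldef
  set n := (Ncm Γ v u).ncard with hndef
  have hl : ∀ ⦃a b : V⦄, Γ.Adj a b → (Cmn Γ a b).ncard = l :=
    fun a b hab => lambda_const harc hab hvu
  have hsplit : p = 1 + l + n := by
    have h1 := neigh_split hvu
    rw [hreg'] at h1
    exact h1
  have hn : ∀ ⦃a b : V⦄, Γ.Adj a b → (Ncm Γ a b).ncard = n := by
    intro a b hab
    have h1 := neigh_split hab
    rw [hreg', hl hab] at h1
    omega
  have hlpos : 0 < l := lambda_pos h2gt h2at hvu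
  have hnpos : 0 < n := ncm_pos hp hreg' harc hconn hnc hvu
  obtain ⟨w₀, hw₀⟩ := exists_geodesic hvu hnpos
  set c := (Cmn Γ v w₀).ncard with hcdef
  have hc : ∀ ⦃a b x : V⦄, Is2Geodesic Γ a b x → (Cmn Γ a x).ncard = c :=
    fun a b x hg => geo_transport h2gt hg hw₀
  have hcpos : 0 < c := by
    rw [hcdef, Set.ncard_pos (Set.toFinite _)]
    exact ⟨u, hvu, hw₀.2.1.symm⟩
  have hclep : c ≤ p := by
    rw [hcdef, ← hreg' v]
    exact Set.ncard_le_ncard (fun x hx => hx.1) (Set.toFinite _)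
  have hcnep : c ≠ p := c_ne_p hp hreg' hn hc hsplit hlpos hnpos u
  have hclow : p + 1 ≤ c + 2 * n := c_lower hreg' hl hsplit hw₀ rfl
  have hcdvdn : c ∣ n := by
    have hdc := double_count hreg' hn hc u
    have h1 : c ∣ n * p := by
      rw [mul_comm n p]
      exact Dvd.intro_left _ hdc.symm
    have hnd : ¬ p ∣ c := fun hdvd =>
      hcnep (le_antisymm hclep (Nat.le_of_dvd hcpos hdvd))
    have hcop : Nat.Coprime c p := Nat.coprime_comm.1 (hp.coprime_iff_not_dvd.2 hnd)
    exact hcop.dvd_of_dvd_mul_right h1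
  have hcn : c ≤ n := Nat.le_of_dvd hnpos hcdvdn
  -- now the group-theoretic part : n ∣ l
  have hdvd_l : n ∣ l := by
    haveI : Fintype ↥(Γ.neighborSet u) := Fintype.ofFinite _
    have hcardΩ : Nat.card ↥(Γ.neighborSet u) = p := hreg u
    set G₀ := autSubgroup Γ u with hG₀
    set x₀v : ↥(Γ.neighborSet u) := ⟨v, hvu.symm⟩ with hx₀v
    have htrans : ∀ x y : ↥(Γ.neighborSet u), ∃ π ∈ G₀, π x = y := by
      intro x y
      obtain ⟨φ, hu, hxy⟩ := harc x.2 y.2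
      refine ⟨restrictAut Γ u φ hu, ⟨φ, hu, rfl⟩, ?_⟩
      apply Subtype.ext
      rw [restrictAut_coe]
      exact hxy
    have horbit : MulAction.orbit G₀ x₀v = Set.univ := by
      ext y
      simp only [Set.mem_univ, iff_true]
      obtain ⟨π, hπ, hxy⟩ := htrans x₀v y
      rw [MulAction.mem_orbit_iff]
      exact ⟨⟨π, hπ⟩, hxy⟩
    have hpdvd : p ∣ Nat.card G₀ := by
      have h1 : Nat.card (MulAction.orbit G₀ x₀v) = p := by
        rw [horbit, Nat.card_coe_set_eq, Set.ncard_univ, hcardΩ]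
      have h2 := Nat.card_congr (MulAction.orbitEquivQuotientStabilizer G₀ x₀v)
      rw [h1] at h2
      rw [h2]
      exact Subgroup.card_quotient_dvd_card _
    obtain ⟨g, hg⟩ := exists_prime_orderOf_dvd_card' p hpdvd
    set σ : Equiv.Perm ↥(Γ.neighborSet u) := (g : Equiv.Perm ↥(Γ.neighborSet u)) with hσdef
    have hσord : orderOf σ = p := by
      rw [hσdef, Subgroup.orderOf_coe, hg]
    set f : ZMod p → ↥(Γ.neighborSet u) := fun k => (σ ^ (ZMod.val k)) x₀v with hfdef
    have hbij : Function.Bijective f := bij_f hp hcardΩ hσord x₀v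
    set e : ↥(Γ.neighborSet u) ≃ ZMod p := (Equiv.ofBijective f hbij).symm with hedef
    have hesymm : ∀ k, e.symm k = f k := fun k => rfl
    have hef : ∀ k, e (f k) = k := fun k => by
      show (Equiv.ofBijective f hbij).symm ((Equiv.ofBijective f hbij) k) = k
      exact Equiv.symm_apply_apply _ _
    have hf0 : f 0 = x₀v := by
      show (σ ^ (ZMod.val (0 : ZMod p))) x₀v = x₀v
      rw [ZMod.val_zero, pow_zero]
      rfl
    set Gh := G₀.map (permConj e) with hGhdef
    -- translation is in Gh
    have hT : Equiv.addLeft (1 : ZMod p) ∈ Gh := by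
      refine Subgroup.mem_map.2 ⟨σ, ?_, ?_⟩
      · rw [hσdef]; exact g.2
      · apply Equiv.ext
        intro k
        rw [permConj_apply, hesymm]
        have hstep : σ (f k) = f (k + 1) := by
          show σ ((σ ^ (ZMod.val k)) x₀v) = (σ ^ (ZMod.val (k + 1))) x₀v
          rw [← Equiv.Perm.mul_apply, ← pow_succ']
          congr 1
          apply pow_eq_pow_iff_modEq.2
          rw [hσord]
          have hval : (k + 1).val = (k.val + 1) % p := by
            rw [ZMod.val_add, ZMod.val_one]
          rw [hval]
          exact (Nat.mod_modEq (k.val + 1) p).symm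
        rw [hstep, hef]
        show k + 1 = 1 + k
        ring
    have hcoe_ne : ∀ k : ZMod p, k ≠ 0 → ((f k : V)) ≠ v := by
      intro k hk heq
      apply hk
      have h1 : f k = x₀v := Subtype.ext heq
      apply hbij.injective
      rw [h1, hf0]
    have hGhmem : ∀ ρ ∈ Gh, ∃ φ : Γ ≃g Γ, ∃ hu : φ u = u,
        ρ = permConj e (restrictAut Γ u φ hu) := by
      intro ρ hρ
      obtain ⟨π, hπ, rfl⟩ := Subgroup.mem_map.1 hρ
      obtain ⟨φ, hu, rfl⟩ := hπ
      exact ⟨φ, hu, rfl⟩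
    have hdecode : ∀ (φ : Γ ≃g Γ) (hu : φ u = u) (k k' : ZMod p),
        (permConj e (restrictAut Γ u φ hu)) k = k' ↔ φ ((f k : V)) = ((f k' : V)) := by
      intro φ hu k k'
      rw [permConj_apply, hesymm]
      constructor
      · intro h
        have h2 : restrictAut Γ u φ hu (f k) = f k' := by
          apply e.injective
          rw [h, hef]
        have h3 := congrArg (Subtype.val) h2
        rwa [restrictAut_coe] at h3
      · intro h
        have h2 : restrictAut Γ u φ hu (f k) = f k' :=
          Subtype.ext (by rw [restrictAut_coe]; exact h)
        rw [h2, hef]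
    have hfv0 : ((f 0 : V)) = v := by rw [hf0]
    set Nh : Set (ZMod p) := {k | k ≠ 0 ∧ ¬ Γ.Adj v ((f k : V))} with hNhdef
    set Sh : Set (ZMod p) := {k | k ≠ 0 ∧ Γ.Adj v ((f k : V))} with hShdef
    have hdecode_all : ∀ ρ ∈ Gh, ρ 0 = 0 → ∀ k k', ρ k = k' →
        ∃ φ : Γ ≃g Γ, φ v = v ∧ φ ((f k : V)) = ((f k' : V)) := by
      intro ρ hρ hρ0 k k' hρk
      obtain ⟨φ, hu, rfl⟩ := hGhmem ρ hρ
      have hφv : φ v = v := by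
        have h0 := (hdecode φ hu 0 0).1 hρ0
        rwa [hfv0] at h0
      exact ⟨φ, hφv, (hdecode φ hu k k').1 hρk⟩
    have hne0_of : ∀ (φ : Γ ≃g Γ), φ v = v → ∀ k k', φ ((f k : V)) = ((f k' : V)) →
        k ≠ 0 → k' ≠ 0 := by
      intro φ hφv k k' hmap hk0 hk'0
      apply hcoe_ne k hk0
      apply φ.injective
      rw [hmap, hk'0, hfv0, hφv]
    have hclosedN : ReqClosed Gh Nh := by
      rintro k ⟨hk0, hka⟩ k' ⟨ρ, hρ, hρ0, hρk⟩
      obtain ⟨φ, hφv, hmap⟩ := hdecode_all ρ hρ hρ0 k k' hρk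
      refine ⟨hne0_of φ hφv k k' hmap hk0, ?_⟩
      intro hadj
      apply hka
      rw [← hmap, ← hφv] at hadj
      exact φ.map_adj_iff.1 hadj
    have hclosedS : ReqClosed Gh Sh := by
      rintro k ⟨hk0, hka⟩ k' ⟨ρ, hρ, hρ0, hρk⟩
      obtain ⟨φ, hφv, hmap⟩ := hdecode_all ρ hρ hρ0 k k' hρk
      refine ⟨hne0_of φ hφv k k' hmap hk0, ?_⟩
      rw [← hmap, ← hφv]
      exact φ.map_adj_iff.2 hka
    have hsingle : ∀ k ∈ Nh, ∀ k' ∈ Nh, Req Gh k k' := by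
      rintro k ⟨hk0, hka⟩ k' ⟨hk'0, hk'a⟩
      have hg1 : Is2Geodesic Γ v u ((f k : V)) :=
        ⟨hvu, (f k).2, fun h => (hcoe_ne k hk0) h.symm, hka⟩
      have hg2 : Is2Geodesic Γ v u ((f k' : V)) :=
        ⟨hvu, (f k').2, fun h => (hcoe_ne k' hk'0) h.symm, hk'a⟩
      obtain ⟨φ, hφv, hφu, hφw⟩ := h2gt.2 hg1 hg2
      refine ⟨permConj e (restrictAut Γ u φ hφu),
        Subgroup.mem_map.2 ⟨_, ⟨φ, hφu, rfl⟩, rfl⟩, ?_, ?_⟩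
      · apply (hdecode φ hφu 0 0).2
        rw [hfv0]
        exact hφv
      · exact (hdecode φ hφu k k').2 hφw
    -- cardinalities
    have hinj : Function.Injective (fun k : ZMod p => ((f k : V))) :=
      fun a b hab => hbij.injective (Subtype.ext hab)
    have himgN : (fun k : ZMod p => ((f k : V))) '' Nh = Ncm Γ v u := by
      ext y
      constructor
      · rintro ⟨k, ⟨hk0, hka⟩, rfl⟩
        exact ⟨(f k).2, hcoe_ne k hk0, hka⟩
      · rintro ⟨hy1, hy2, hy3⟩
        have hfe : f (e ⟨y, hy1⟩) = ⟨y, hy1⟩ := by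
          rw [← hesymm]; exact e.symm_apply_apply _
        refine ⟨e ⟨y, hy1⟩, ⟨?_, ?_⟩, ?_⟩
        · intro h0
          apply hy2
          have h1 : (⟨y, hy1⟩ : ↥(Γ.neighborSet u)) = x₀v := by
            rw [← hfe, h0, hf0]
          exact congrArg Subtype.val h1
        · rw [hfe]; exact hy3
        · show ((f (e ⟨y, hy1⟩) : V)) = y
          rw [hfe]
    have himgS : (fun k : ZMod p => ((f k : V))) '' Sh = Cmn Γ v u := by
      ext y
      constructor
      · rintro ⟨k, ⟨hk0, hka⟩, rfl⟩
        exact ⟨hka, (f k).2⟩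
      · rintro ⟨hy1, hy2⟩
        have hfe : f (e ⟨y, hy2⟩) = ⟨y, hy2⟩ := by
          rw [← hesymm]; exact e.symm_apply_apply _
        refine ⟨e ⟨y, hy2⟩, ⟨?_, ?_⟩, ?_⟩
        · intro h0
          have h1 : (⟨y, hy2⟩ : ↥(Γ.neighborSet u)) = x₀v := by
            rw [← hfe, h0, hf0]
          have h2 : y = v := congrArg Subtype.val h1
          rw [h2] at hy1
          exact Γ.loopless.irrefl v hy1
        · rw [hfe]; exact hy1
        · show ((f (e ⟨y, hy2⟩) : V)) = y
          rw [hfe]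
    have hNcard : Nh.ncard = n := by
      rw [hndef, ← himgN, Set.ncard_image_of_injective _ hinj]
    have hScard : Sh.ncard = l := by
      rw [hldef, ← himgS, Set.ncard_image_of_injective _ hinj]
    have hNne : Nh.Nonempty := by
      rw [← Set.ncard_pos (Set.toFinite _), hNcard]
      exact hnpos
    obtain ⟨n₀, hn₀⟩ := hNne
    have hn₀0 : n₀ ≠ 0 := hn₀.1
    have hclassN : {z | Req Gh n₀ z} = Nh := by
      apply Set.Subset.antisymm
      · intro z hz
        exact hclosedN n₀ hn₀ z hz
      · intro z hz
        exact hsingle n₀ hn₀ z hz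
    have h0S : (0 : ZMod p) ∉ Sh := fun h => h.1 rfl
    have hfin := class_ncard_dvd_reqClosed hT hclosedS h0S hn₀0
    rw [hclassN, hNcard, hScard] at hfin
    exact hfin
  -- final arithmetic
  obtain ⟨k, hk⟩ := hdvd_l
  rcases Nat.lt_or_ge k 2 with hk2 | hk2
  · interval_cases k
    · omega
    · omega
  · have h2n : 2 * n ≤ l := by
      calc 2 * n = n * 2 := by ring
        _ ≤ n * k := Nat.mul_le_mul_left n hk2
        _ = l := hk.symm
    omega
end

section
/- Let q be a prime power with q ≡ 1 (mod 4) and let Γ = P(q) be the Paley graph on F_q. For distinct vertices u, v of Γ: if u and v are adjacent then they have exactly (q-5)/4 common neighbours, and if u and v are not adjacent then they have exactly (q-1)/4 common neighbours. -/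
open SimpleGraph

/-- The Paley graph on the field `F`: distinct `u`, `v` are adjacent iff `u - v` is
a nonzero square (symmetrised via `fromRel`; when `|F| ≡ 1 (mod 4)` the relation is
already symmetric, since `-1` is then a square). -/
def paleyGraph (F : Type*) [Field F] : SimpleGraph F :=
  SimpleGraph.fromRel (fun u v => ∃ x : F, x ≠ 0 ∧ u - v = x ^ 2)


section PaleyAux

open Finset

variable {F : Type*} [Field F] [Fintype F]

lemma paley_hchar2 (h4 : Fintype.card F % 4 = 1) : ringChar F ≠ 2 := by
  intro h
  have := FiniteField.even_card_of_char_two h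
  omega

variable [DecidableEq F]

lemma paley_chi_neg_one (h4 : Fintype.card F % 4 = 1) : quadraticChar F (-1) = 1 := by
  rw [quadraticChar_one_iff_isSquare (neg_ne_zero.mpr one_ne_zero),
    FiniteField.isSquare_neg_one_iff]
  omega

lemma paley_adj_iff (h4 : Fintype.card F % 4 = 1) {u v : F} :
    (paleyGraph F).Adj u v ↔ u ≠ v ∧ quadraticChar F (u - v) = 1 := by
  rw [paleyGraph, SimpleGraph.fromRel_adj]
  constructor
  · rintro ⟨hne, ⟨x, hx, hx2⟩ | ⟨x, hx, hx2⟩⟩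
    · exact ⟨hne, by rw [hx2]; exact quadraticChar_sq_one' hx⟩
    · refine ⟨hne, ?_⟩
      have : u - v = -(x ^ 2) := by rw [← hx2]; ring
      rw [this, ← neg_one_mul, map_mul, paley_chi_neg_one h4, quadraticChar_sq_one' hx, one_mul]
  · rintro ⟨hne, hχ⟩
    have hne0 : u - v ≠ 0 := sub_ne_zero.mpr hne
    obtain ⟨r, hr⟩ := (quadraticChar_one_iff_isSquare hne0).mp hχ
    refine ⟨hne, Or.inl ⟨r, fun h0 => hne0 (by rw [hr, h0, mul_zero]), by rw [hr]; ring⟩⟩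

lemma paley_sum_chi_mul (h4 : Fintype.card F % 4 = 1) {a : F} (ha : a ≠ 0) :
    ∑ x : F, quadraticChar F x * quadraticChar F (x - a) = -1 := by
  have hF2 := paley_hchar2 h4
  have hinv : (quadraticChar F)⁻¹ = quadraticChar F := (quadraticChar_isQuadratic F).inv
  have hJ : jacobiSum (quadraticChar F) (quadraticChar F) = -1 := by
    have := jacobiSum_nontrivial_inv (quadraticChar_ne_one hF2)
    rw [hinv, paley_chi_neg_one h4] at this
    simpa using this
  have key : ∀ x : F, quadraticChar F (a * x) * quadraticChar F (a * x - a)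
      = quadraticChar F x * quadraticChar F (1 - x) := by
    intro x
    have h1 : a * x - a = a * (-1 * (1 - x)) := by ring
    rw [h1, map_mul, map_mul, map_mul, paley_chi_neg_one h4, one_mul]
    have : quadraticChar F a * (quadraticChar F x) *
        (quadraticChar F a * quadraticChar F (1 - x))
        = (quadraticChar F a * quadraticChar F a) *
          (quadraticChar F x * quadraticChar F (1 - x)) := by ring
    rw [this, ← sq, quadraticChar_sq_one ha, one_mul]
  calc ∑ x : F, quadraticChar F x * quadraticChar F (x - a)
      = ∑ x : F, quadraticChar F (a * x) * quadraticChar F (a * x - a) :=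
        (Fintype.sum_equiv (Equiv.mulLeft₀ a ha)
          (fun x => quadraticChar F (a * x) * quadraticChar F (a * x - a))
          (fun y => quadraticChar F y * quadraticChar F (y - a)) (fun x => rfl)).symm
    _ = ∑ x : F, quadraticChar F x * quadraticChar F (1 - x) :=
        Finset.sum_congr rfl fun x _ => key x
    _ = -1 := hJ

lemma paley_count_key (h4 : Fintype.card F % 4 = 1) {u v : F} (huv : u ≠ v) :
    (4 : ℤ) * (Nat.card {x : F | (paleyGraph F).Adj u x ∧ (paleyGraph F).Adj v x})
      = (Fintype.card F : ℤ) - 3 - 2 * quadraticChar F (u - v) := by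
  classical
  set χ := quadraticChar F with hχdef
  have ha : u - v ≠ 0 := sub_ne_zero.mpr huv
  set S : Finset F :=
    univ.filter (fun x => (paleyGraph F).Adj u x ∧ (paleyGraph F).Adj v x) with hS
  have hNS : Nat.card {x : F | (paleyGraph F).Adj u x ∧ (paleyGraph F).Adj v x} = S.card := by
    rw [Nat.card_eq_fintype_card]
    convert Fintype.card_subtype _
    · exact Iff.rfl
    · infer_instance
  set f : F → ℤ := fun x => (1 + χ (u - x)) * (1 + χ (v - x)) with hf
  have sumA : ∑ x : F, f x = (Fintype.card F : ℤ) - 1 := by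
    have expand : ∀ x : F, f x = 1 + χ (u - x) + χ (v - x) + χ (u - x) * χ (v - x) := by
      intro x; simp only [hf]; ring
    rw [Finset.sum_congr rfl fun x _ => expand x]
    have h1 : ∑ x : F, χ (u - x) = 0 := by
      rw [Fintype.sum_equiv (Equiv.subLeft u) (fun x => χ (u - x)) χ (fun x => rfl)]
      exact quadraticChar_sum_zero (paley_hchar2 h4)
    have h2 : ∑ x : F, χ (v - x) = 0 := by
      rw [Fintype.sum_equiv (Equiv.subLeft v) (fun x => χ (v - x)) χ (fun x => rfl)]
      exact quadraticChar_sum_zero (paley_hchar2 h4)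
    have h3 : ∑ x : F, χ (u - x) * χ (v - x) = -1 := by
      rw [Fintype.sum_equiv (Equiv.subLeft u) (fun x => χ (u - x) * χ (v - x))
        (fun y => χ y * χ (y - (u - v))) (fun x => by
          show χ (u - x) * χ (v - x) = χ (u - x) * χ (u - x - (u - v))
          rw [show u - x - (u - v) = v - x by ring])]
      exact paley_sum_chi_mul h4 ha
    simp only [Finset.sum_add_distrib, h1, h2, h3, Finset.sum_const, Finset.card_univ,
      nsmul_eq_mul, mul_one]
    ring
  have hχvu : χ (v - u) = χ (u - v) := by
    rw [show v - u = -1 * (u - v) by ring, map_mul, paley_chi_neg_one h4, one_mul]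
  have point : ∀ x : F, f x = 4 * (if x ∈ S then (1 : ℤ) else 0)
      + (if x = u then 1 + χ (v - u) else 0) + (if x = v then 1 + χ (u - v) else 0) := by
    intro x
    by_cases hxu : x = u
    · subst hxu
      have hnS : x ∉ S := by
        simp only [hS, mem_filter]
        rintro ⟨-, hadj, -⟩; exact (paleyGraph F).loopless.irrefl x hadj
      rw [hf, if_neg hnS, if_pos rfl, if_neg huv]
      simp only [sub_self, hχdef, quadraticChar_zero]
      ring
    · by_cases hxv : x = v
      · subst hxv
        have hnS : x ∉ S := by
          simp only [hS, mem_filter]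
          rintro ⟨-, -, hadj⟩; exact (paleyGraph F).loopless.irrefl x hadj
        rw [hf, if_neg hnS, if_neg hxu, if_pos rfl]
        simp only [sub_self, hχdef, quadraticChar_zero]
        ring
      · rw [if_neg hxu, if_neg hxv, add_zero, add_zero]
        by_cases hmem : x ∈ S
        · have hx := (mem_filter.mp hmem).2
          have h1 : χ (u - x) = 1 := ((paley_adj_iff h4).mp hx.1).2
          have h2 : χ (v - x) = 1 := ((paley_adj_iff h4).mp hx.2).2
          rw [hf]; simp only [h1, h2, if_pos hmem]; norm_num
        · have hd1 : χ (u - x) = 1 ∨ χ (u - x) = -1 :=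
            quadraticChar_dichotomy (sub_ne_zero.mpr (Ne.symm hxu))
          have hd2 : χ (v - x) = 1 ∨ χ (v - x) = -1 :=
            quadraticChar_dichotomy (sub_ne_zero.mpr (Ne.symm hxv))
          have hno : ¬(χ (u - x) = 1 ∧ χ (v - x) = 1) := by
            rintro ⟨h1, h2⟩
            exact hmem (mem_filter.mpr ⟨mem_univ x, ⟨(paley_adj_iff h4).mpr ⟨Ne.symm hxu, h1⟩,
              (paley_adj_iff h4).mpr ⟨Ne.symm hxv, h2⟩⟩⟩)
          rw [hf, if_neg hmem]
          rcases hd1 with h1 | h1 <;> rcases hd2 with h2 | h2 <;>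
            simp [h1, h2] at hno ⊢
  have sumB : ∑ x : F, f x = 4 * S.card + (2 + 2 * χ (u - v)) := by
    rw [Finset.sum_congr rfl fun x _ => point x]
    rw [Finset.sum_add_distrib, Finset.sum_add_distrib, ← Finset.mul_sum]
    have e1 : ∑ x : F, (if x ∈ S then (1 : ℤ) else 0) = S.card := by
      rw [Finset.sum_ite_mem, Finset.univ_inter, Finset.sum_const, nsmul_eq_mul, mul_one]
    have e2 : ∑ x : F, (if x = u then 1 + χ (v - u) else 0) = 1 + χ (v - u) := by
      rw [Finset.sum_ite_eq' univ u, if_pos (mem_univ u)]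
    have e3 : ∑ x : F, (if x = v then 1 + χ (u - v) else 0) = 1 + χ (u - v) := by
      rw [Finset.sum_ite_eq' univ v, if_pos (mem_univ v)]
    rw [e1, e2, e3, hχvu]
    ring
  rw [hNS]
  rw [sumB] at sumA
  linarith

end PaleyAux

theorem stmt18 (q : ℕ) (F : Type*) [Field F] [Fintype F]
    (hcard : Fintype.card F = q) (hq : q % 4 = 1) :
    ∀ u v : F, u ≠ v →
      ((paleyGraph F).Adj u v →
        Nat.card {x : F | (paleyGraph F).Adj u x ∧ (paleyGraph F).Adj v x} = (q - 5) / 4) ∧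
      (¬ (paleyGraph F).Adj u v →
        Nat.card {x : F | (paleyGraph F).Adj u x ∧ (paleyGraph F).Adj v x} = (q - 1) / 4) := by
  classical
  intro u v huv
  have h4 : Fintype.card F % 4 = 1 := by rw [hcard]; exact hq
  have hq2 : 2 ≤ q := by
    rw [← hcard]; exact Fintype.one_lt_card
  have hq5 : 5 ≤ q := by omega
  have hkey := paley_count_key h4 huv
  rw [hcard] at hkey
  have ha : u - v ≠ 0 := sub_ne_zero.mpr huv
  constructor
  · intro hadj
    have hχ : quadraticChar F (u - v) = 1 := ((paley_adj_iff h4).mp hadj).2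
    rw [hχ] at hkey
    have h5 : (4 : ℤ) * (Nat.card {x : F | (paleyGraph F).Adj u x ∧ (paleyGraph F).Adj v x})
        = (q : ℤ) - 5 := by linarith
    omega
  · intro hnadj
    have hχ : quadraticChar F (u - v) = -1 := by
      rcases quadraticChar_dichotomy ha with h | h
      · exact absurd ((paley_adj_iff h4).mpr ⟨huv, h⟩) hnadj
      · exact h
    rw [hχ] at hkey
    have h5 : (4 : ℤ) * (Nat.card {x : F | (paleyGraph F).Adj u x ∧ (paleyGraph F).Adj v x})
        = (q : ℤ) - 1 := by linarith
    omega
end
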